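/- Let α, β : ℝ² → ℝ³ be smooth maps satisfying α_v − β_u = 2 α × β and α_u + β_v = (2/√3) α × β. Then the functions f = 2 α·β and h = α·α − β·β satisfy the Cauchy–Riemann equations: f_u = h_v and f_v = −h_u; hence f + ih is holomorphic in z = u + iv. -/

import Mathlib

open Matrix

noncomputable section

lemma hasDerivAt_dot' {f g : ℝ → Fin 3 → ℝ} {f' g' : Fin 3 → ℝ} {x : ℝ}
    (hf : HasDerivAt f f' x) (hg : HasDerivAt g g' x) :
    HasDerivAt (fun t => f t ⬝ᵥ g t) (f' ⬝ᵥ g x + f x ⬝ᵥ g') x := by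
  have h : HasDerivAt (fun t => f t ⬝ᵥ g t)
      (∑ i : Fin 3, (f' i * g x i + f x i * g' i)) x := by
    simp only [dotProduct]
    exact HasDerivAt.fun_sum fun i _ =>
      ((hasDerivAt_pi.mp hf i).mul (hasDerivAt_pi.mp hg i))
  convert h using 1
  simp [dotProduct, Finset.sum_add_distrib]

/-- if `α, β : ℝ² → ℝ³` satisfy the structure equations
`α_v − β_u = 2 α × β` and `α_u + β_v = (2/√3) α × β`, then `f = 2 α·β` and
`h = α·α − β·β` satisfy the Cauchy–Riemann equations `f_u = h_v`,
`f_v = −h_u` (hence `f + ih` is holomorphic in `z = u + iv`). -/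
theorem stmt_18 (α β αu αv βu βv : ℝ → ℝ → Fin 3 → ℝ)
    (hαu : ∀ u v, HasDerivAt (fun u' => α u' v) (αu u v) u)
    (hαv : ∀ u v, HasDerivAt (fun v' => α u v') (αv u v) v)
    (hβu : ∀ u v, HasDerivAt (fun u' => β u' v) (βu u v) u)
    (hβv : ∀ u v, HasDerivAt (fun v' => β u v') (βv u v) v)
    (heq1 : ∀ u v, αv u v - βu u v = (2 : ℝ) • crossProduct (α u v) (β u v))
    (heq2 : ∀ u v,
      αu u v + βv u v = (2 / Real.sqrt 3) • crossProduct (α u v) (β u v)) :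
    ∀ u v,
      deriv (fun u' => 2 * (α u' v ⬝ᵥ β u' v)) u
        = deriv (fun v' => α u v' ⬝ᵥ α u v' - β u v' ⬝ᵥ β u v') v ∧
      deriv (fun v' => 2 * (α u v' ⬝ᵥ β u v')) v
        = -deriv (fun u' => α u' v ⬝ᵥ α u' v - β u' v ⬝ᵥ β u' v) u := by
  intro u v
  have e1 : αv u v = (2 : ℝ) • crossProduct (α u v) (β u v) + βu u v :=
    eq_add_of_sub_eq (heq1 u v)
  have e2 : βv u v = (2 / Real.sqrt 3) • crossProduct (α u v) (β u v) - αu u v :=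
    eq_sub_of_add_eq' (heq2 u v)
  have d1 : deriv (fun u' => 2 * (α u' v ⬝ᵥ β u' v)) u
      = 2 * (αu u v ⬝ᵥ β u v + α u v ⬝ᵥ βu u v) :=
    (((hasDerivAt_dot' (hαu u v) (hβu u v)).const_mul 2)).deriv
  have d2 : deriv (fun v' => α u v' ⬝ᵥ α u v' - β u v' ⬝ᵥ β u v') v
      = (αv u v ⬝ᵥ α u v + α u v ⬝ᵥ αv u v) - (βv u v ⬝ᵥ β u v + β u v ⬝ᵥ βv u v) :=
    ((hasDerivAt_dot' (hαv u v) (hαv u v)).sub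
      (hasDerivAt_dot' (hβv u v) (hβv u v))).deriv
  have d3 : deriv (fun v' => 2 * (α u v' ⬝ᵥ β u v')) v
      = 2 * (αv u v ⬝ᵥ β u v + α u v ⬝ᵥ βv u v) :=
    (((hasDerivAt_dot' (hαv u v) (hβv u v)).const_mul 2)).deriv
  have d4 : deriv (fun u' => α u' v ⬝ᵥ α u' v - β u' v ⬝ᵥ β u' v) u
      = (αu u v ⬝ᵥ α u v + α u v ⬝ᵥ αu u v) - (βu u v ⬝ᵥ β u v + β u v ⬝ᵥ βu u v) :=
    ((hasDerivAt_dot' (hαu u v) (hαu u v)).sub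
      (hasDerivAt_dot' (hβu u v) (hβu u v))).deriv
  rw [d1, d2, d3, d4, e1, e2]
  constructor <;>
  · simp [cross_apply, dotProduct, Fin.sum_univ_three]
    ring
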